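/- Fix α ∈ (0, 1] and a finite partition A = {A_g}_{g ∈ [K]} of the universe U into K groups. Let C = (L_1, L_2, ...) be a countable collection of languages, let m*_α(L_i) be the representative non-uniform complexities computed by Procedure 3, and let f : ℕ → ℕ be any non-decreasing function with f(t) → ∞ as t → ∞. Then there exists a representative generating algorithm G that generates non-uniformly with α-representation from C with times t_{α,G}(L_i) ≤ max(g(i), m*_α(L_i) + 1) for every i, where g(i) is the smallest number j for which f(j) ≥ i. -/

import Mathlib

open scoped Classical

/-- The group distribution induced by the uniform (empirical) distribution on the
finite set `T`: `empA A T g = |T ∩ A_g| / |T|`. -/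
noncomputable def empA {K : ℕ} (A : Fin K → Set ℕ) (T : Finset ℕ) (g : Fin K) : ℝ :=
  (((↑T : Set ℕ) ∩ A g).ncard : ℝ) / (T.card : ℝ)

/-- The scarce groups in the partition `A` with respect to the subcollection `C'` (a
finite set of language indices) and the finite set `T`:
`B = {g : A_g ∩ ((⋂_{i ∈ C'} L i) \ T) = ∅}`. -/
noncomputable def scarceGroups {K : ℕ} (A : Fin K → Set ℕ) (L : ℕ → Set ℕ)
    (C' : Finset ℕ) (T : Finset ℕ) : Finset (Fin K) :=
  Finset.univ.filter fun g => A g ∩ ((⋂ i ∈ C', L i) \ ↑T) = ∅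

/-- `T` suffers group scarcity with respect to `C'` and the partition `A`: either some
scarce group `g` has `emp_T^A(g) > α`, or `Σ_{g ∈ B} emp_T^A(g) > α ⬝ (K - |B|)`. -/
def SuffersScarcity {K : ℕ} (A : Fin K → Set ℕ) (α : ℝ) (L : ℕ → Set ℕ)
    (C' : Finset ℕ) (T : Finset ℕ) : Prop :=
  (∃ g ∈ scarceGroups A L C' T, α < empA A T g) ∨
    α * ((K : ℝ) - ((scarceGroups A L C' T).card : ℝ)) <
      ∑ g ∈ scarceGroups A L C' T, empA A T g

/-- A valid pair `(s, T)` for Step i of the while loop of Procedure 3: `s` is a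
subcollection (of indices drawn from the prefix `pre` or equal to `last`) containing
`last`, every language of `s` contains `T`, and `T` suffers group scarcity with respect
to `s` and `A`. -/
def ValidSubR {K : ℕ} (A : Fin K → Set ℕ) (α : ℝ) (L : ℕ → Set ℕ)
    (pre : List ℕ) (last : ℕ) (s : Finset ℕ) (T : Finset ℕ) : Prop :=
  last ∈ s ∧ (∀ k ∈ s, k = last ∨ k ∈ pre) ∧
    (∀ k ∈ s, (↑T : Set ℕ) ⊆ L k) ∧ SuffersScarcity A α L s T

/-- `m` is the value `m_chk` of Step i of Procedure 3: the largest size of a valid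
witness set `T` (and `0` if none exists). -/
def IsMchkR {K : ℕ} (A : Fin K → Set ℕ) (α : ℝ) (L : ℕ → Set ℕ)
    (pre : List ℕ) (last : ℕ) (m : ℕ) : Prop :=
  ((¬ ∃ s T, ValidSubR A α L pre last s T) ∧ m = 0) ∨
    ((∃ s T, ValidSubR A α L pre last s T ∧ T.card = m) ∧
      ∀ s T, ValidSubR A α L pre last s T → T.card ≤ m)

/-- `(sC, sT)` witness `m = m_chk` in Step i of Procedure 3 (everything empty, `m = 0`
if no valid pair exists). -/
def WitnessAtR {K : ℕ} (A : Fin K → Set ℕ) (α : ℝ) (L : ℕ → Set ℕ)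
    (pre : List ℕ) (last : ℕ) (sC : Finset ℕ) (sT : Finset ℕ) (m : ℕ) : Prop :=
  ((¬ ∃ s T, ValidSubR A α L pre last s T) ∧ sC = ∅ ∧ sT = ∅ ∧ m = 0) ∨
    (ValidSubR A α L pre last sC sT ∧ sT.card = m ∧
      ∀ s T, ValidSubR A α L pre last s T → T.card ≤ m)

/-- A run of Procedure 3 (insertion sort for representative non-uniform generation) on
the collection `L 0, L 1, ...` (0-based: `L i` is the paper's `L_{i+1}`). `ord i` is the
maintained ordering `C'_i`, `pos i` the (0-based) final insertion position of language
`i` in iteration `i`, and `witT i`, `witC i`, `mstar i` are `T(L_i)`, `C(L_i)` and the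
representative non-uniform complexity `m*_α(L_i)`. -/
structure Proc3Run {K : ℕ} (A : Fin K → Set ℕ) (α : ℝ) (L : ℕ → Set ℕ) where
  ord : ℕ → List ℕ
  pos : ℕ → ℕ
  witT : ℕ → Finset ℕ
  witC : ℕ → Finset ℕ
  mstar : ℕ → ℕ
  ord_zero : ord 0 = []
  pos_le : ∀ i, pos i ≤ i
  ord_succ : ∀ i, ord (i + 1) = (ord i).take (pos i) ++ i :: (ord i).drop (pos i)
  /-- While moving language `i` forward through each intermediate position `q` with
  `pos i < q ≤ i`, the while loop did not break. -/
  moved : ∀ i q, pos i < q → q ≤ i →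
    ∀ m, IsMchkR A α L ((ord i).take q) i m → m ≤ mstar ((ord i).getD (q - 1) 0)
  /-- At the final position the while loop broke. -/
  stopped : ∀ i, pos i = 0 ∨ mstar ((ord i).getD (pos i - 1) 0) < mstar i
  wit_spec : ∀ i, WitnessAtR A α L ((ord i).take (pos i)) i (witC i) (witT i) (mstar i)

/-- The input prefix `x_1, ..., x_t` presented to the algorithm at time `t`. -/
def inputList (x : ℕ → ℕ) (t : ℕ) : List ℕ := (List.range t).map x

/-- `S_t`: the set of distinct strings among the first `t` inputs. -/
def Sfin (x : ℕ → ℕ) (t : ℕ) : Finset ℕ := (inputList x t).toFinset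

/-- `x` is an enumeration of the language `Lang`. -/
def IsEnumOf (x : ℕ → ℕ) (Lang : Set ℕ) : Prop :=
  (∀ t, x t ∈ Lang) ∧ ∀ s ∈ Lang, ∃ t, x t = s

/-- `p` is a probability distribution on the universe `ℕ`. -/
def IsDist (p : ℕ → ℝ) : Prop := (∀ x, 0 ≤ p x) ∧ ∑' x, p x = 1

/-- The probability mass a distribution `p` places on the set `S`. -/
noncomputable def prMass (p : ℕ → ℝ) (S : Set ℕ) : ℝ := ∑' x, S.indicator p x

/-- A representative generating algorithm `G` (outputting a distribution over strings
after each input prefix) generates non-uniformly with `α`-representation from the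
collection `L`, with times `tG`: it always outputs distributions; on any enumeration of
any `L i` its output group distribution is within `α` of the empirical group
distribution (in sup-norm) at every time `t ≥ 1`; and whenever `|S_t| ≥ tG i` its
output distribution is supported on `L i \ S_t`. -/
def RepNonUniformGen {K : ℕ} (A : Fin K → Set ℕ) (α : ℝ)
    (G : List ℕ → ℕ → ℝ) (L : ℕ → Set ℕ) (tG : ℕ → ℕ) : Prop :=
  (∀ inp : List ℕ, IsDist (G inp)) ∧
    ∀ i (x : ℕ → ℕ), IsEnumOf x (L i) →
      (∀ t, 1 ≤ t →
        ∀ g, |empA A (Sfin x t) g - prMass (G (inputList x t)) (A g)| ≤ α) ∧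
      (∀ t, 1 ≤ t → tG i ≤ (Sfin x t).card →
        prMass (G (inputList x t)) (L i \ ↑(Sfin x t)) = 1)

section AuxStmt18

variable {K : ℕ} {A : Fin K → Set ℕ} {α : ℝ} {L : ℕ → Set ℕ}

lemma grp_unique (hdisj : ∀ g g', g ≠ g' → Disjoint (A g) (A g'))
    (hcover : (⋃ g, A g) = Set.univ) (x : ℕ) : ∃ g₀, ∀ g, x ∈ A g ↔ g = g₀ := by
  have hx : x ∈ ⋃ g, A g := hcover ▸ Set.mem_univ x
  obtain ⟨g₀, hg₀⟩ := Set.mem_iUnion.1 hx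
  refine ⟨g₀, fun g => ⟨fun hg => ?_, fun h => h ▸ hg₀⟩⟩
  by_contra hne
  exact Set.disjoint_left.mp (hdisj g g₀ hne) hg hg₀

lemma inter_eq_filter (A : Fin K → Set ℕ) (T : Finset ℕ) (g : Fin K) :
    (↑T : Set ℕ) ∩ A g = ↑(T.filter (· ∈ A g)) := by
  ext a; simp [Finset.mem_filter]

lemma ncard_inter_eq (A : Fin K → Set ℕ) (T : Finset ℕ) (g : Fin K) :
    ((↑T : Set ℕ) ∩ A g).ncard = (T.filter (· ∈ A g)).card := by
  rw [inter_eq_filter, Set.ncard_coe_finset]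

lemma card_split (hdisj : ∀ g g', g ≠ g' → Disjoint (A g) (A g'))
    (hcover : (⋃ g, A g) = Set.univ) (T : Finset ℕ) :
    ∑ g : Fin K, ((↑T : Set ℕ) ∩ A g).ncard = T.card := by
  simp_rw [ncard_inter_eq, Finset.card_filter]
  rw [Finset.sum_comm]
  have h1 : ∀ x ∈ T, (∑ g : Fin K, if x ∈ A g then 1 else 0) = 1 := by
    intro x _
    obtain ⟨g₀, hg₀⟩ := grp_unique hdisj hcover x
    have h2 : ∀ g ∈ (Finset.univ : Finset (Fin K)),
        (if x ∈ A g then (1:ℕ) else 0) = (if g = g₀ then 1 else 0) :=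
      fun g _ => if_congr (hg₀ g) rfl rfl
    rw [Finset.sum_congr rfl h2, Finset.sum_ite_eq' Finset.univ g₀ (fun _ => 1)]
    simp
  rw [Finset.sum_congr rfl h1]
  simp

lemma empA_nonneg (A : Fin K → Set ℕ) (T : Finset ℕ) (g : Fin K) : 0 ≤ empA A T g :=
  div_nonneg (Nat.cast_nonneg _) (Nat.cast_nonneg _)

lemma sum_empA (hdisj : ∀ g g', g ≠ g' → Disjoint (A g) (A g'))
    (hcover : (⋃ g, A g) = Set.univ) {T : Finset ℕ} (hT : T.Nonempty) :
    ∑ g : Fin K, empA A T g = 1 := by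
  unfold empA
  rw [← Finset.sum_div]
  rw [show ∑ g : Fin K, (((↑T : Set ℕ) ∩ A g).ncard : ℝ)
      = ((∑ g : Fin K, ((↑T : Set ℕ) ∩ A g).ncard : ℕ) : ℝ) by push_cast; ring]
  rw [card_split hdisj hcover]
  exact div_self (by exact_mod_cast Finset.card_ne_zero_of_mem hT.choose_spec)

lemma isDist_sum {ι : Type} (F : Finset ι) (y : ι → ℕ) (w : ι → ℝ)
    (hw : ∀ g ∈ F, 0 ≤ w g) (hsum : ∑ g ∈ F, w g = 1) :
    IsDist (fun n => ∑ g ∈ F, if n = y g then w g else 0) := by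
  constructor
  · intro n
    refine Finset.sum_nonneg fun g hg => ?_
    split <;> simp [hw g hg]
  · rw [Summable.tsum_finsetSum (fun g _ => (hasSum_ite_eq (y g) (w g)).summable)]
    simp_rw [tsum_ite_eq]
    exact hsum

lemma prMass_sum {ι : Type} (F : Finset ι) (y : ι → ℕ) (w : ι → ℝ) (Sset : Set ℕ) :
    prMass (fun n => ∑ g ∈ F, if n = y g then w g else 0) Sset
      = ∑ g ∈ F, if y g ∈ Sset then w g else 0 := by
  unfold prMass
  have h1 : ∀ n, Sset.indicator (fun n => ∑ g ∈ F, if n = y g then w g else 0) n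
      = ∑ g ∈ F, (if n = y g then (if y g ∈ Sset then w g else 0) else 0) := by
    intro n
    by_cases hn : n ∈ Sset
    · rw [Set.indicator_of_mem hn]
      refine Finset.sum_congr rfl fun g _ => ?_
      by_cases h : n = y g
      · subst h; simp [hn]
      · simp [h]
    · rw [Set.indicator_of_notMem hn]
      symm
      refine Finset.sum_eq_zero fun g _ => ?_
      by_cases h : n = y g
      · subst h; simp [hn]
      · simp [h]
  rw [tsum_congr h1, Summable.tsum_finsetSum (fun g _ => (hasSum_ite_eq (y g) _).summable)]
  simp_rw [tsum_ite_eq]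

end AuxStmt18

section AuxStmt18B

variable {K : ℕ} {A : Fin K → Set ℕ} {α : ℝ} {L : ℕ → Set ℕ}

/-- Bound on the size of sets suffering scarcity for a subcollection `s`. -/
noncomputable def Mbound (A : Fin K → Set ℕ) (L : ℕ → Set ℕ) (s : Finset ℕ) : ℕ :=
  ∑ g : Fin K, (A g ∩ ⋂ k ∈ s, L k).ncard

lemma validsub_bound (hα0 : 0 < α) (hα1 : α ≤ 1)
    (hdisj : ∀ g g', g ≠ g' → Disjoint (A g) (A g'))
    (hcover : (⋃ g, A g) = Set.univ) {pre : List ℕ} {last : ℕ} {s T : Finset ℕ}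
    (h : ValidSubR A α L pre last s T) : α * T.card ≤ (Mbound A L s : ℝ) := by
  obtain ⟨hlast, hsub, hTsub, hsc⟩ := h
  set W : Set ℕ := ⋂ k ∈ s, L k with hW
  set B : Finset (Fin K) := scarceGroups A L s T with hBdef
  have hTW : (↑T : Set ℕ) ⊆ W := by
    intro a ha
    rw [hW, Set.mem_iInter₂]
    exact fun k hk => hTsub k hk ha
  have hscW : ∀ g ∈ B, A g ∩ W = (↑T : Set ℕ) ∩ A g := by
    intro g hg
    have hg' : A g ∩ (W \ ↑T) = ∅ := by
      rw [hBdef, scarceGroups, Finset.mem_filter] at hg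
      exact hg.2
    ext a
    constructor
    · rintro ⟨ha1, ha2⟩
      have haT : a ∈ (↑T : Set ℕ) := by
        by_contra haT
        have hmem : a ∈ A g ∩ (W \ ↑T) := ⟨ha1, ha2, haT⟩
        rw [hg'] at hmem
        exact hmem
      exact ⟨haT, ha1⟩
    · rintro ⟨ha1, ha2⟩
      exact ⟨ha2, hTW ha1⟩
  have hBK : (B.card : ℝ) ≤ (K : ℝ) := by
    exact_mod_cast (Finset.card_le_univ B).trans_eq (by simp)
  have hTpos : 0 < (T.card : ℝ) := by
    rcases Nat.eq_zero_or_pos T.card with h0 | hpos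
    · exfalso
      have hemp : ∀ g, empA A T g = 0 := by
        intro g; unfold empA; rw [h0]; simp
      rcases hsc with ⟨g, _, hlt⟩ | hlt
      · rw [hemp g] at hlt; linarith
      · rw [Finset.sum_congr rfl (fun g _ => hemp g), Finset.sum_const, smul_zero] at hlt
        nlinarith
    · exact_mod_cast hpos
  have hempeq : ∀ g, empA A T g = (((↑T : Set ℕ) ∩ A g).ncard : ℝ) / (T.card : ℝ) :=
    fun g => rfl
  rcases hsc with ⟨g, hgB, hlt⟩ | hlt
  · -- a single scarce group with large empirical mass
    have hMterm : (((↑T : Set ℕ) ∩ A g).ncard : ℝ) ≤ (Mbound A L s : ℝ) := by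
      have : ((↑T : Set ℕ) ∩ A g).ncard ≤ Mbound A L s := by
        rw [← hscW g hgB]
        exact Finset.single_le_sum (f := fun g => (A g ∩ W).ncard)
          (fun _ _ => Nat.zero_le _) (Finset.mem_univ g)
      exact_mod_cast this
    have h1 : α * T.card < (((↑T : Set ℕ) ∩ A g).ncard : ℝ) := by
      rw [hempeq g, lt_div_iff₀ hTpos] at hlt
      exact hlt
    exact (h1.trans_le hMterm).le
  · -- the sum over scarce groups is large
    have hs : ∑ g ∈ B, empA A T g ≤ (Mbound A L s : ℝ) / (T.card : ℝ) := by
      rw [Finset.sum_congr rfl (fun g hg => hempeq g), ← Finset.sum_div]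
      have hle : ∑ g ∈ B, ((↑T : Set ℕ) ∩ A g).ncard ≤ Mbound A L s := by
        calc ∑ g ∈ B, ((↑T : Set ℕ) ∩ A g).ncard
            = ∑ g ∈ B, (A g ∩ W).ncard :=
              Finset.sum_congr rfl (fun g hg => by rw [hscW g hg])
          _ ≤ ∑ g : Fin K, (A g ∩ W).ncard :=
              Finset.sum_le_sum_of_subset (Finset.subset_univ B)
          _ = Mbound A L s := rfl
      have hle' : (∑ g ∈ B, (((↑T : Set ℕ) ∩ A g).ncard : ℝ)) ≤ (Mbound A L s : ℝ) := by
        exact_mod_cast hle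
      gcongr
    by_cases hB : B.card < K
    · have h1 : (1 : ℝ) ≤ (K : ℝ) - B.card := by
        have : (B.card : ℝ) + 1 ≤ K := by exact_mod_cast hB
        linarith
      have h2 : α < (Mbound A L s : ℝ) / (T.card : ℝ) :=
        lt_of_le_of_lt (le_mul_of_one_le_right hα0.le h1) (hlt.trans_le hs)
      rw [lt_div_iff₀ hTpos] at h2
      exact h2.le
    · -- all groups are scarce: T equals the whole intersection
      have hBuniv : B = Finset.univ := by
        apply Finset.eq_univ_of_card
        have := Finset.card_le_univ B
        simp only [Finset.card_univ, Fintype.card_fin] at this ⊢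
        omega
      have hWT : W ⊆ (↑T : Set ℕ) := by
        intro a haW
        obtain ⟨g₀, hg₀⟩ := grp_unique hdisj hcover a
        have hmem : a ∈ A g₀ ∩ W := ⟨(hg₀ g₀).2 rfl, haW⟩
        rw [hscW g₀ (hBuniv ▸ Finset.mem_univ g₀)] at hmem
        exact hmem.1
      have hTeq : (↑T : Set ℕ) = W := Set.Subset.antisymm hTW hWT
      have hcard : T.card = Mbound A L s := by
        rw [← card_split hdisj hcover T]
        exact Finset.sum_congr rfl (fun g _ => by
          rw [Set.inter_comm (A g) W, ← hTeq])
      rw [← hcard]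
      exact mul_le_of_le_one_left hTpos.le hα1

end AuxStmt18B

section AuxStmt18C

variable {K : ℕ} {A : Fin K → Set ℕ} {α : ℝ} {L : ℕ → Set ℕ}

lemma exists_mchk (hα0 : 0 < α) (hα1 : α ≤ 1)
    (hdisj : ∀ g g', g ≠ g' → Disjoint (A g) (A g'))
    (hcover : (⋃ g, A g) = Set.univ) (pre : List ℕ) (last : ℕ) :
    ∃ m, IsMchkR A α L pre last m := by
  by_cases h : ∃ s T, ValidSubR A α L pre last s T
  · set SS : Set ℕ := {n | ∃ s T, ValidSubR A α L pre last s T ∧ T.card = n} with hSS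
    have hbdd : BddAbove SS := by
      refine ⟨(pre.toFinset ∪ {last}).powerset.sup
        (fun s => ⌈(Mbound A L s : ℝ) / α⌉₊), ?_⟩
      rintro n ⟨s, T, hv, rfl⟩
      have h1 : α * T.card ≤ (Mbound A L s : ℝ) := validsub_bound hα0 hα1 hdisj hcover hv
      have h2 : (T.card : ℝ) ≤ (Mbound A L s : ℝ) / α := by
        rw [le_div_iff₀ hα0]
        linarith [mul_comm α (T.card : ℝ)]
      have h3 : T.card ≤ ⌈(Mbound A L s : ℝ) / α⌉₊ := by
        have h4 := Nat.ceil_le_ceil h2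
        rwa [Nat.ceil_natCast] at h4
      refine h3.trans (Finset.le_sup (f := fun s => ⌈(Mbound A L s : ℝ) / α⌉₊) ?_)
      rw [Finset.mem_powerset]
      intro k hk
      rcases hv.2.1 k hk with rfl | hkpre
      · simp
      · simp [List.mem_toFinset, hkpre]
    have hne : SS.Nonempty := by
      obtain ⟨s, T, hv⟩ := h
      exact ⟨T.card, s, T, hv, rfl⟩
    refine ⟨sSup SS, Or.inr ⟨?_, ?_⟩⟩
    · exact Nat.sSup_mem hne hbdd
    · intro s T hv
      exact le_csSup hbdd ⟨s, T, hv, rfl⟩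
  · exact ⟨0, Or.inl ⟨h, rfl⟩⟩

end AuxStmt18C

section AuxStmt18D

variable {K : ℕ} {A : Fin K → Set ℕ} {α : ℝ} {L : ℕ → Set ℕ}

lemma ord_length (R : Proc3Run A α L) : ∀ N, (R.ord N).length = N := by
  intro N
  induction N with
  | zero => rw [R.ord_zero]; rfl
  | succ n ih =>
    rw [R.ord_succ n]
    have := R.pos_le n
    simp only [List.length_append, List.length_take, List.length_cons, List.length_drop, ih]
    omega

lemma mem_ord (R : Proc3Run A α L) : ∀ N i, i < N → i ∈ R.ord N := by
  intro N
  induction N with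
  | zero => intro i hi; omega
  | succ n ih =>
    intro i hi
    rw [R.ord_succ n]
    rcases Nat.lt_succ_iff_lt_or_eq.mp hi with h | rfl
    · have h2 : i ∈ (R.ord n).take (R.pos n) ++ (R.ord n).drop (R.pos n) := by
        rw [List.take_append_drop]; exact ih i h
      rcases List.mem_append.mp h2 with h3 | h3
      · exact List.mem_append.mpr (Or.inl h3)
      · exact List.mem_append.mpr (Or.inr (List.mem_cons_of_mem _ h3))
    · exact List.mem_append.mpr (Or.inr (List.mem_cons_self))

lemma proc3_inv (hα0 : 0 < α) (hα1 : α ≤ 1)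
    (hdisj : ∀ g g', g ≠ g' → Disjoint (A g) (A g'))
    (hcover : (⋃ g, A g) = Set.univ) (R : Proc3Run A α L) :
    ∀ N q, q < N → ∀ s T,
      ValidSubR A α L ((R.ord N).take q) ((R.ord N).getD q 0) s T →
      T.card ≤ R.mstar ((R.ord N).getD q 0) := by
  intro N
  induction N with
  | zero => intro q hq; omega
  | succ n ih =>
    intro q hq s T hv
    have hlen : (R.ord n).length = n := ord_length R n
    have hlen' : (R.ord (n+1)).length = n + 1 := ord_length R (n+1)
    have hp : R.pos n ≤ n := R.pos_le n
    have hord := R.ord_succ n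
    have hlentake : ((R.ord n).take (R.pos n)).length = R.pos n := by
      rw [List.length_take, hlen]; omega
    rcases lt_trichotomy q (R.pos n) with hcase | hcase | hcase
    · -- q before the insertion point
      have htake : (R.ord (n+1)).take q = (R.ord n).take q := by
        rw [hord, List.take_append, hlentake,
          Nat.sub_eq_zero_of_le hcase.le, List.take_zero, List.append_nil,
          List.take_take, min_eq_left hcase.le]
      have hget : (R.ord (n+1)).getD q 0 = (R.ord n).getD q 0 := by
        have hq1 : q < (R.ord (n+1)).length := by omega
        have hq2 : q < (R.ord n).length := by omega
        rw [List.getD_eq_getElem _ _ hq1, List.getD_eq_getElem _ _ hq2,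
          List.getElem_of_eq hord]
        rw [List.getElem_append_left (by rw [hlentake]; omega)]
        exact List.getElem_take
      rw [htake, hget] at hv
      rw [hget]
      exact ih q (by omega) s T hv
    · -- q is the insertion point: the element there is n
      subst hcase
      have htake : (R.ord (n+1)).take (R.pos n) = (R.ord n).take (R.pos n) := by
        rw [hord, List.take_append, hlentake, Nat.sub_self,
          List.take_zero, List.append_nil, List.take_take, min_self]
      have hget : (R.ord (n+1)).getD (R.pos n) 0 = n := by
        have hq1 : R.pos n < (R.ord (n+1)).length := by omega
        rw [List.getD_eq_getElem _ _ hq1, List.getElem_of_eq hord,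
          List.getElem_append_right (by rw [hlentake])]
        simp [hlentake]
      rw [htake, hget] at hv
      rw [hget]
      rcases R.wit_spec n with ⟨hno, _, _, _⟩ | ⟨_, _, hub⟩
      · exact absurd ⟨s, T, hv⟩ hno
      · exact hub s T hv
    · -- q after the insertion point
      have hq1 : q - 1 < n := by omega
      have hgete : (R.ord (n+1)).getD q 0 = (R.ord n).getD (q-1) 0 := by
        have hq2 : q < (R.ord (n+1)).length := by omega
        have hq3 : q - 1 < (R.ord n).length := by omega
        rw [List.getD_eq_getElem _ _ hq2, List.getD_eq_getElem _ _ hq3,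
          List.getElem_of_eq hord]
        rw [List.getElem_append_right (by rw [hlentake]; omega)]
        have hsub : q - ((R.ord n).take (R.pos n)).length = (q - R.pos n - 1) + 1 := by
          rw [hlentake]; omega
        simp only [hsub, List.getElem_cons_succ]
        rw [List.getElem_drop]
        congr 1
        omega
      have hmem : ∀ k, k ∈ (R.ord (n+1)).take q ↔ (k = n ∨ k ∈ (R.ord n).take (q-1)) := by
        intro k
        have e1 : (R.ord (n+1)).take q
            = (R.ord n).take (R.pos n) ++
              n :: (((R.ord n).drop (R.pos n)).take (q - R.pos n - 1)) := by
          rw [hord, List.take_append, hlentake]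
          congr 1
          · rw [List.take_take, min_eq_right hcase.le]
          · obtain ⟨j, hj⟩ : ∃ j, q - R.pos n = j + 1 := ⟨q - R.pos n - 1, by omega⟩
            rw [hj, List.take_succ_cons]
            congr 2
        have e2 : (R.ord n).take (q-1)
            = (R.ord n).take (R.pos n) ++
              ((R.ord n).drop (R.pos n)).take (q - R.pos n - 1) := by
          have h5 := List.take_add (l := R.ord n) (i := R.pos n) (j := q - R.pos n - 1)
          rw [show R.pos n + (q - R.pos n - 1) = q - 1 from by omega] at h5
          exact h5
        rw [e1, e2]
        simp only [List.mem_append, List.mem_cons]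
        tauto
      rw [hgete] at hv
      rw [hgete]
      by_cases hNs : n ∈ s
      · have hv2 : ValidSubR A α L ((R.ord n).take q) n s T := by
          refine ⟨hNs, ?_, hv.2.2.1, hv.2.2.2⟩
          intro k hk
          rcases hv.2.1 k hk with rfl | hk2
          · right
            have hq3 : q - 1 < (R.ord n).length := by omega
            rw [List.getD_eq_getElem _ _ hq3]
            have hq4 : q - 1 < ((R.ord n).take q).length := by
              rw [List.length_take]; omega
            have h6 : ((R.ord n).take q)[q-1]'hq4 = (R.ord n)[q-1]'hq3 :=
              List.getElem_take
            rw [← h6]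
            exact List.getElem_mem hq4
          · rcases (hmem k).1 hk2 with rfl | hk3
            · exact Or.inl rfl
            · right
              have h7 : (R.ord n).take (q-1) = ((R.ord n).take q).take (q-1) := by
                rw [List.take_take, min_eq_left (by omega)]
              exact List.take_subset _ _ (h7 ▸ hk3)
        obtain ⟨m, hm⟩ := exists_mchk (L := L) hα0 hα1 hdisj hcover ((R.ord n).take q) n
        have hub : T.card ≤ m := by
          rcases hm with ⟨hno, _⟩ | ⟨_, hub⟩
          · exact absurd ⟨s, T, hv2⟩ hno
          · exact hub s T hv2
        exact hub.trans (R.moved n q hcase (by omega) m hm)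
      · have hv2 : ValidSubR A α L ((R.ord n).take (q-1)) ((R.ord n).getD (q-1) 0) s T := by
          refine ⟨hv.1, ?_, hv.2.2.1, hv.2.2.2⟩
          intro k hk
          rcases hv.2.1 k hk with rfl | hk2
          · exact Or.inl rfl
          · rcases (hmem k).1 hk2 with rfl | hk3
            · exact absurd hk hNs
            · exact Or.inr hk3
        exact ih (q-1) hq1 s T hv2

end AuxStmt18D

/-- Theorem 5.5: representative generation times. Fix `α ∈ (0, 1]`
and a finite partition `A` of the universe into `K` groups. For any non-decreasing
`f : ℕ → ℕ` tending to infinity, there is a representative generating algorithm that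
generates non-uniformly with `α`-representation from `L` with times
`t*_α(L_i) ≤ max (g i) (m*_α(L_i) + 1)`, where `g i` is the smallest `j` with
`f j ≥ i` (0-based: `f j ≥ i + 1`). -/
theorem stmt_18 {K : ℕ} (A : Fin K → Set ℕ) (α : ℝ) (hα0 : 0 < α) (hα1 : α ≤ 1)
    (hdisj : ∀ g g', g ≠ g' → Disjoint (A g) (A g')) (hcover : (⋃ g, A g) = Set.univ)
    (L : ℕ → Set ℕ) (hL : ∀ i, (L i).Infinite) (R : Proc3Run A α L)
    (f : ℕ → ℕ) (hf : Monotone f)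
    (hftop : Filter.Tendsto f Filter.atTop Filter.atTop) :
    ∃ (G : List ℕ → ℕ → ℝ) (tG : ℕ → ℕ), RepNonUniformGen A α G L tG ∧
      ∀ i, tG i ≤ max (sInf {j : ℕ | i + 1 ≤ f j}) (R.mstar i + 1) := by
  classical
  set tG : ℕ → ℕ := fun i => max (sInf {j : ℕ | i + 1 ≤ f j}) (R.mstar i + 1) with htG
  have htGm : ∀ i, R.mstar i + 1 ≤ tG i := fun i => le_max_right _ _
  have hfI : ∀ i n, tG i ≤ n → i < f n := by
    intro i n hn
    have hne : {j : ℕ | i + 1 ≤ f j}.Nonempty := (hftop.eventually_ge_atTop (i+1)).exists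
    have h1 : i + 1 ≤ f (sInf {j : ℕ | i + 1 ≤ f j}) := Nat.sInf_mem hne
    have h2 : sInf {j : ℕ | i + 1 ≤ f j} ≤ n := le_trans (le_max_left _ _) hn
    have h3 := hf h2
    omega
  set Iset : Finset ℕ → Finset ℕ := fun S =>
    (Finset.range (f S.card)).filter (fun i => (↑S : Set ℕ) ⊆ L i ∧ tG i ≤ S.card)
    with hIs
  have hIset_mem : ∀ (S : Finset ℕ) (i : ℕ), (↑S : Set ℕ) ⊆ L i → tG i ≤ S.card → i ∈ Iset S := by
    intro S i h1 h2
    rw [hIs, Finset.mem_filter, Finset.mem_range]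
    exact ⟨hfI i S.card h2, h1, h2⟩
  have hIset_spec : ∀ S i, i ∈ Iset S →
      i < f S.card ∧ (↑S : Set ℕ) ⊆ L i ∧ tG i ≤ S.card := by
    intro S i hi
    rw [hIs, Finset.mem_filter, Finset.mem_range] at hi
    exact ⟨hi.1, hi.2⟩
  -- the key claim: the input set never suffers scarcity w.r.t. the active collection
  have hnsc : ∀ S : Finset ℕ, (Iset S).Nonempty → ¬ SuffersScarcity A α L (Iset S) S := by
    intro S hne hsc
    set N := f S.card with hN
    have hmem : ∀ i ∈ Iset S, i ∈ R.ord N := by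
      intro i hi
      exact mem_ord R N i (hIset_spec S i hi).1
    obtain ⟨istar, histar, hmax⟩ :=
      Finset.exists_max_image (Iset S) (fun k => List.idxOf k (R.ord N)) hne
    set q := List.idxOf istar (R.ord N) with hqdef
    have hqlen : q < (R.ord N).length := List.idxOf_lt_length_of_mem (hmem _ histar)
    have hqN : q < N := by rwa [ord_length R N] at hqlen
    have hget : (R.ord N).getD q 0 = istar := by
      rw [List.getD_eq_getElem _ _ hqlen]
      exact List.getElem_idxOf hqlen
    have hv : ValidSubR A α L ((R.ord N).take q) istar (Iset S) S := by
      refine ⟨histar, ?_, fun k hk => (hIset_spec S k hk).2.1, hsc⟩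
      intro k hk
      by_cases hke : k = istar
      · exact Or.inl hke
      · right
        have hkmem := hmem k hk
        have hklen : List.idxOf k (R.ord N) < (R.ord N).length :=
          List.idxOf_lt_length_of_mem hkmem
        have hkq : List.idxOf k (R.ord N) < q := by
          rcases lt_or_eq_of_le (hmax k hk) with h | h
          · exact h
          · exfalso
            apply hke
            calc k = (R.ord N)[List.idxOf k (R.ord N)]'hklen :=
                  (List.getElem_idxOf hklen).symm
              _ = (R.ord N)[q]'hqlen := by simp only [h]
              _ = istar := by rw [← List.getD_eq_getElem _ 0 hqlen, hget]
        have h8 : List.idxOf k (R.ord N) < ((R.ord N).take q).length := by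
          rw [List.length_take]; omega
        have h9 : ((R.ord N).take q)[List.idxOf k (R.ord N)]'h8 = k := by
          rw [List.getElem_take]
          exact List.getElem_idxOf hklen
        rw [← h9]
        exact List.getElem_mem h8
    have hcard := proc3_inv hα0 hα1 hdisj hcover R N q hqN (Iset S) S (by rwa [hget])
    rw [hget] at hcard
    have h10 := (hIset_spec S istar histar).2.2
    have h11 := htGm istar
    omega
  -- construction of a good distribution for each possible input set
  have hdist : ∀ S : Finset ℕ, ∃ p, IsDist p ∧
      (S.Nonempty → ∀ g, |empA A S g - prMass p (A g)| ≤ α) ∧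
      (∀ i ∈ Iset S, prMass p (L i \ ↑S) = 1) := by
    intro S
    by_cases hS : S.Nonempty
    · by_cases hI : (Iset S).Nonempty
      · -- scarcity-free case: mass on one fresh point per non-scarce group
        have hn := hnsc S hI
        rw [SuffersScarcity] at hn
        push_neg at hn
        obtain ⟨h1, h2⟩ := hn
        set B : Finset (Fin K) := scarceGroups A L (Iset S) S with hBdef
        have hBle : B.card ≤ K := by
          have := Finset.card_le_univ B
          simpa using this
        have hBK : B.card < K := by
          rcases lt_or_eq_of_le hBle with h | h
          · exact h
          · exfalso
            have hBuniv : B = Finset.univ := Finset.eq_univ_of_card B (by simp [h])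
            have hsum1 : ∑ g ∈ B, empA A S g = 1 := by
              rw [hBuniv]; exact sum_empA hdisj hcover hS
            rw [hsum1, h] at h2
            simp at h2
            linarith
        have hKB : (0:ℝ) < (K : ℝ) - B.card := by
          have : (B.card : ℝ) + 1 ≤ K := by exact_mod_cast hBK
          linarith
        set E := ∑ g ∈ B, empA A S g with hE
        have hE0 : 0 ≤ E := Finset.sum_nonneg fun g _ => empA_nonneg A S g
        have hEα : E / ((K:ℝ) - B.card) ≤ α := by
          rw [div_le_iff₀ hKB]
          linarith [mul_comm α ((K:ℝ) - B.card)]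
        set F : Finset (Fin K) := Finset.univ \ B with hF
        have hych : ∀ g : Fin K, ∃ a, g ∈ F →
            a ∈ A g ∩ ((⋂ i ∈ Iset S, L i) \ ↑S) := by
          intro g
          by_cases hg : g ∈ F
          · have hgB : g ∉ B := (Finset.mem_sdiff.mp hg).2
            have hne' : (A g ∩ ((⋂ i ∈ Iset S, L i) \ ↑S)).Nonempty := by
              rw [Set.nonempty_iff_ne_empty]
              intro hemp
              apply hgB
              rw [hBdef, scarceGroups, Finset.mem_filter]
              exact ⟨Finset.mem_univ g, hemp⟩
            obtain ⟨a, ha⟩ := hne'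
            exact ⟨a, fun _ => ha⟩
          · exact ⟨0, fun h => absurd h hg⟩
        choose y hy using hych
        set w : Fin K → ℝ := fun g => empA A S g + E / ((K:ℝ) - B.card) with hw
        have hw0 : ∀ g, 0 ≤ w g := fun g =>
          add_nonneg (empA_nonneg A S g) (div_nonneg hE0 hKB.le)
        have hcardF : (F.card : ℝ) = (K:ℝ) - B.card := by
          rw [hF, Finset.card_sdiff_of_subset (Finset.subset_univ B), Finset.card_univ,
            Fintype.card_fin, Nat.cast_sub hBle]
        have hsumw : ∑ g ∈ F, w g = 1 := by
          rw [hw]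
          rw [Finset.sum_add_distrib, Finset.sum_const, nsmul_eq_mul, hcardF]
          have hsd := Finset.sum_sdiff (f := fun g => empA A S g) (Finset.subset_univ B)
          rw [sum_empA hdisj hcover hS] at hsd
          rw [← hF] at hsd
          have hmul : ((K:ℝ) - B.card) * (E / ((K:ℝ) - B.card)) = E := by
            field_simp
          rw [hmul]
          linarith
        refine ⟨fun n => ∑ g ∈ F, if n = y g then w g else 0,
          isDist_sum F y w (fun g _ => hw0 g) hsumw, ?_, ?_⟩
        · intro _ g
          rw [prMass_sum F y w (A g)]
          have hsum2 : ∑ g' ∈ F, (if y g' ∈ A g then w g' else 0)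
              = if g ∈ F then w g else 0 := by
            by_cases hgF : g ∈ F
            · rw [if_pos hgF]
              refine (Finset.sum_eq_single_of_mem g hgF fun b hb hbg => ?_).trans
                (if_pos (hy g hgF).1)
              exact if_neg fun h =>
                Set.disjoint_left.mp (hdisj b g hbg) (hy b hb).1 h
            · rw [if_neg hgF]
              refine Finset.sum_eq_zero fun b hb => if_neg fun h => hgF ?_
              by_cases hbg : b = g
              · exact hbg ▸ hb
              · exact absurd h (Set.disjoint_left.mp (hdisj b g hbg) (hy b hb).1)
          rw [hsum2]
          by_cases hg : g ∈ F
          · rw [if_pos hg, hw]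
            simp only []
            rw [show empA A S g - (empA A S g + E / ((K:ℝ) - B.card))
                = -(E / ((K:ℝ) - B.card)) by ring]
            rw [abs_neg, abs_of_nonneg (div_nonneg hE0 hKB.le)]
            exact hEα
          · rw [if_neg hg, sub_zero, abs_of_nonneg (empA_nonneg A S g)]
            have hgB : g ∈ B := by
              by_contra hgB
              exact hg (Finset.mem_sdiff.mpr ⟨Finset.mem_univ g, hgB⟩)
            exact h1 g hgB
        · intro i hi
          rw [prMass_sum F y w (L i \ ↑S)]
          have hall : ∀ g ∈ F, y g ∈ L i \ (↑S : Set ℕ) := by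
            intro g hg
            have h3 := (hy g hg).2
            exact ⟨Set.biInter_subset_of_mem hi h3.1, h3.2⟩
          exact (Finset.sum_congr rfl fun g hg => if_pos (hall g hg)).trans hsumw
      · -- no active language: output the uniform distribution on S
        have hc0 : (S.card : ℝ) ≠ 0 := by
          exact_mod_cast Finset.card_ne_zero_of_mem hS.choose_spec
        refine ⟨fun n => ∑ a ∈ S, if n = id a then (S.card : ℝ)⁻¹ else 0,
          isDist_sum S id (fun _ => (S.card : ℝ)⁻¹)
            (fun a _ => inv_nonneg.mpr (Nat.cast_nonneg _))
            (by rw [Finset.sum_const, nsmul_eq_mul, mul_inv_cancel₀ hc0]), ?_, ?_⟩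
        · intro _ g
          rw [prMass_sum S id (fun _ => (S.card : ℝ)⁻¹) (A g)]
          simp only [id_eq]
          have hsum3 : ∑ a ∈ S, (if a ∈ A g then (S.card:ℝ)⁻¹ else 0)
              = ((S.filter (· ∈ A g)).card : ℝ) * (S.card:ℝ)⁻¹ := by
            rw [← Finset.sum_filter, Finset.sum_const, nsmul_eq_mul]
          rw [hsum3]
          have hempeq : empA A S g = ((S.filter (· ∈ A g)).card : ℝ) / (S.card : ℝ) := by
            unfold empA
            rw [ncard_inter_eq]
          rw [hempeq, div_eq_mul_inv, sub_self, abs_zero]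
          exact hα0.le
        · intro i hi
          exact absurd ⟨i, hi⟩ hI
    · -- empty input set: any distribution works
      refine ⟨fun n => ∑ a ∈ ({0} : Finset ℕ), if n = id a then (1:ℝ) else 0,
        isDist_sum {0} id (fun _ => (1:ℝ)) (fun _ _ => zero_le_one) (by simp),
        fun h => absurd h hS, ?_⟩
      intro i hi
      exfalso
      have h4 := (hIset_spec S i hi).2.2
      have h5 := htGm i
      have h6 : S.card = 0 := by
        rw [Finset.card_eq_zero]
        exact Finset.not_nonempty_iff_eq_empty.mp hS
      omega
  -- assemble the generator
  refine ⟨fun inp => (hdist inp.toFinset).choose, tG,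
    ⟨fun inp => (hdist inp.toFinset).choose_spec.1, ?_⟩, fun i => le_rfl⟩
  intro i x henum
  constructor
  · intro t ht g
    have hSne : (Sfin x t).Nonempty := by
      refine ⟨x 0, ?_⟩
      rw [Sfin, List.mem_toFinset, inputList]
      exact List.mem_map.mpr ⟨0, List.mem_range.mpr (by omega), rfl⟩
    exact ((hdist (inputList x t).toFinset).choose_spec.2.1 hSne) g
  · intro t ht hcard
    have hsubL : (↑(Sfin x t) : Set ℕ) ⊆ L i := by
      intro a ha
      have ha' : a ∈ inputList x t := List.mem_toFinset.mp (Finset.mem_coe.mp ha)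
      obtain ⟨j, _, rfl⟩ := List.mem_map.mp ha'
      exact henum.1 j
    exact (hdist (inputList x t).toFinset).choose_spec.2.2 i
      (hIset_mem (Sfin x t) i hsubL hcard)
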